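/- arXiv:2409.19165 — 11 statements merged into one kernel-verified Lean document; each statement's English description precedes it below -/
import Mathlib

section
/- Let P be a convex, centrally symmetric subset of the plane. If P contains the point (0, 7.5), a point (x, -10) for some real x, a point (10, -y) for some y in [0,5], and a point (t, 10-t) for some real t, then P contains either all four points (0,4), (4,-4), (4,0), (4,4), or all four points (0,-4), (4,-8), (4,-4), (4,0). -/
private lemma comb2' {P : Set (ℝ × ℝ)} (hP : Convex ℝ P) {p1 p2 q1 q2 : ℝ}
    (hp : (p1, p2) ∈ P) (hq : (q1, q2) ∈ P) {a b : ℝ}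
    (ha : 0 ≤ a) (hb : 0 ≤ b) (hab : a + b = 1) {r1 r2 : ℝ}
    (e1 : a * p1 + b * q1 = r1) (e2 : a * p2 + b * q2 = r2) : (r1, r2) ∈ P := by
  have h := hP hp hq ha hb hab
  have : a • ((p1, p2) : ℝ × ℝ) + b • ((q1, q2) : ℝ × ℝ) = (r1, r2) := by
    simp [Prod.ext_iff, smul_eq_mul, e1, e2]
  rwa [this] at h

private lemma comb3' {P : Set (ℝ × ℝ)} (hP : Convex ℝ P) {p1 p2 q1 q2 s1 s2 : ℝ}
    (hp : (p1, p2) ∈ P) (hq : (q1, q2) ∈ P) (hs : (s1, s2) ∈ P) {a b c : ℝ}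
    (ha : 0 ≤ a) (hb : 0 ≤ b) (hc : 0 ≤ c) (habc : a + b + c = 1) {r1 r2 : ℝ}
    (e1 : a * p1 + b * q1 + c * s1 = r1) (e2 : a * p2 + b * q2 + c * s2 = r2) :
    (r1, r2) ∈ P := by
  by_cases hab : a + b = 0
  · have ha0 : a = 0 := le_antisymm (by linarith) ha
    have hb0 : b = 0 := le_antisymm (by linarith) hb
    have hc1 : c = 1 := by linarith
    subst ha0; subst hb0; subst hc1
    simp only [zero_mul, zero_add, one_mul] at e1 e2
    rw [← e1, ← e2]; exact hs
  · have habpos : 0 < a + b := lt_of_le_of_ne (by linarith) (Ne.symm hab)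
    have hin : (a / (a + b) * p1 + b / (a + b) * q1,
        a / (a + b) * p2 + b / (a + b) * q2) ∈ P :=
      comb2' hP hp hq (div_nonneg ha habpos.le) (div_nonneg hb habpos.le)
        (by field_simp) rfl rfl
    refine comb2' hP hin hs (a := a + b) (b := c) habpos.le hc (by linarith) ?_ ?_
    · rw [show (a + b) * (a / (a + b) * p1 + b / (a + b) * q1) = a * p1 + b * q1 by
        field_simp]
      exact e1
    · rw [show (a + b) * (a / (a + b) * p2 + b / (a + b) * q2) = a * p2 + b * q2 by
        field_simp]
      exact e2

private lemma vertseg {P : Set (ℝ × ℝ)} (hP : Convex ℝ P) {u a b c : ℝ}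
    (hpa : (u, a) ∈ P) (hpb : (u, b) ∈ P) (hac : a ≤ c) (hcb : c ≤ b) : (u, c) ∈ P := by
  rcases eq_or_lt_of_le (hac.trans hcb) with h | h
  · have : c = a := le_antisymm (h ▸ hcb) hac
    rw [this]; exact hpa
  · have hba : 0 < b - a := by linarith
    have hne : b - a ≠ 0 := ne_of_gt hba
    have hμ1 : (c - a) / (b - a) ≤ 1 := by rw [div_le_one hba]; linarith
    exact comb2' hP hpb hpa (a := (c - a) / (b - a)) (b := 1 - (c - a) / (b - a))
      (div_nonneg (by linarith) hba.le) (by linarith) (by ring) (by ring)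
      (by field_simp; ring)

theorem stmt_0 (P : Set (ℝ × ℝ)) (hconv : Convex ℝ P)
    (hsymm : ∀ p ∈ P, -p ∈ P)
    (h1 : ((0 : ℝ), (7.5 : ℝ)) ∈ P)
    (h2 : ∃ x : ℝ, ((x, (-10 : ℝ)) ∈ P))
    (h3 : ∃ y : ℝ, 0 ≤ y ∧ y ≤ 5 ∧ ((10 : ℝ), -y) ∈ P)
    (h4 : ∃ t : ℝ, ((t, 10 - t) ∈ P)) :
    (((0 : ℝ), (4 : ℝ)) ∈ P ∧ ((4 : ℝ), (-4 : ℝ)) ∈ P ∧ ((4 : ℝ), (0 : ℝ)) ∈ P ∧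
      ((4 : ℝ), (4 : ℝ)) ∈ P) ∨
    (((0 : ℝ), (-4 : ℝ)) ∈ P ∧ ((4 : ℝ), (-8 : ℝ)) ∈ P ∧ ((4 : ℝ), (-4 : ℝ)) ∈ P ∧
      ((4 : ℝ), (0 : ℝ)) ∈ P) := by
  obtain ⟨y, hy0, hy5, hC⟩ := h3
  obtain ⟨t, hD⟩ := h4
  have hA : ((0 : ℝ), (7.5 : ℝ)) ∈ P := h1
  have hA' : ((0 : ℝ), (-7.5 : ℝ)) ∈ P := by
    have := hsymm _ h1
    simpa using this
  have hD' : ((-t : ℝ), t - 10) ∈ P := by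
    have := hsymm _ hD
    simpa [neg_sub] using this
  have hL : ((4 : ℝ), -4.5 - 0.4 * y) ∈ P :=
    comb2' hconv hA' hC (a := 0.6) (b := 0.4) (by norm_num) (by norm_num) (by norm_num)
      (by norm_num) (by ring)
  have hH : ((4 : ℝ), 4.5 - 0.4 * y) ∈ P :=
    comb2' hconv hA hC (a := 0.6) (b := 0.4) (by norm_num) (by norm_num) (by norm_num)
      (by norm_num) (by ring)
  have h04 : ((0 : ℝ), (4 : ℝ)) ∈ P := vertseg hconv hA' hA (by norm_num) (by norm_num)
  have h04' : ((0 : ℝ), (-4 : ℝ)) ∈ P := vertseg hconv hA' hA (by norm_num) (by norm_num)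
  have key : (∃ h : ℝ, 4 ≤ h ∧ ((4 : ℝ), h) ∈ P) ∨
      (∃ l : ℝ, l ≤ -8 ∧ ((4 : ℝ), l) ∈ P) := by
    rcases le_total t (-4) with ht | ht
    · -- t ≤ -4 : use -D and -A
      right
      have htneg : t < 0 := by linarith
      have ht' : t ≠ 0 := ne_of_lt htneg
      have hm0 : 0 ≤ -4 / t := by
        rw [div_nonneg_iff]; right; exact ⟨by norm_num, htneg.le⟩
      have hm1 : -4 / t ≤ 1 := by
        rw [div_le_iff_of_neg htneg]; linarith
      refine ⟨-4 / t * (t - 10) + (1 - -4 / t) * (-7.5), ?_, ?_⟩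
      · have heq : -4 / t * (t - 10) + (1 - -4 / t) * (-7.5) = -11.5 + 10 / t := by
          field_simp
          ring
        have : 10 / t < 0 := div_neg_of_pos_of_neg (by norm_num) htneg
        rw [heq]; linarith
      · refine comb2' hconv hD' hA' hm0 (by linarith) (by ring) ?_ rfl
        field_simp
        ring
    · rcases le_total 4 t with ht4 | ht4
      · rcases le_total t 20 with ht20 | ht20
        · -- 4 ≤ t ≤ 20 : use D and A
          left
          have htpos : 0 < t := by linarith
          have hm1 : 4 / t ≤ 1 := by rw [div_le_one htpos]; linarith
          refine ⟨4 / t * (10 - t) + (1 - 4 / t) * 7.5, ?_, ?_⟩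
          · have heq : 4 / t * (10 - t) + (1 - 4 / t) * 7.5 = 3.5 + 10 / t := by
              field_simp; ring
            have : 0.5 ≤ 10 / t := by
              rw [le_div_iff₀ htpos]; linarith
            rw [heq]; linarith
          · refine comb2' hconv hD hA (by positivity) (by linarith) (by ring) ?_ rfl
            field_simp
            ring
        · -- t ≥ 20 : use D and -A
          right
          have htpos : 0 < t := by linarith
          have hm1 : 4 / t ≤ 1 := by rw [div_le_one htpos]; linarith
          refine ⟨4 / t * (10 - t) + (1 - 4 / t) * (-7.5), ?_, ?_⟩
          · have heq : 4 / t * (10 - t) + (1 - 4 / t) * (-7.5) = -11.5 + 70 / t := by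
              field_simp; ring
            have : 70 / t ≤ 3.5 := by
              rw [div_le_iff₀ htpos]; linarith
            rw [heq]; linarith
          · refine comb2' hconv hD hA' (by positivity) (by linarith) (by ring) ?_ rfl
            field_simp
            ring
      · -- -4 ≤ t ≤ 4
        rcases le_total (y * (4 - t)) (2 * (10 - t)) with hyc | hyc
        · -- use D and C
          left
          have h10t : (0 : ℝ) < 10 - t := by linarith
          have hm1 : 6 / (10 - t) ≤ 1 := by rw [div_le_one h10t]; linarith
          refine ⟨6 / (10 - t) * (10 - t) + (1 - 6 / (10 - t)) * (-y), ?_, ?_⟩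
          · have heq : 6 / (10 - t) * (10 - t) + (1 - 6 / (10 - t)) * (-y)
                = 6 - y * (4 - t) / (10 - t) := by
              field_simp; ring
            have : y * (4 - t) / (10 - t) ≤ 2 := by
              rw [div_le_iff₀ h10t]; linarith
            rw [heq]; linarith
          · refine comb2' hconv hD hC (by positivity) (by linarith) (by ring) ?_ rfl
            field_simp; ring
        · -- three-point combination of C, -A, -D gives (4, -8)
          right
          have ht0 : t ≤ 0 := by
            nlinarith [mul_nonneg (by linarith : (0:ℝ) ≤ 5 - y)
              (by linarith : (0:ℝ) ≤ 4 - t)]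
          have hd : (0 : ℝ) < 50 - 35 * t + 2 * y * t := by nlinarith
          set g : ℝ := (70 - 8 * y) / (50 - 35 * t + 2 * y * t) with hg
          set a : ℝ := (4 + t * g) / 10 with ha
          have hg0 : 0 ≤ g := div_nonneg (by linarith) hd.le
          have hgval : g * (50 - 35 * t + 2 * y * t) = 70 - 8 * y := by
            rw [hg]; exact div_mul_cancel₀ _ hd.ne'
          have ha0 : 0 ≤ a := by
            have h1' : 4 + t * g = (200 - 70 * t) / (50 - 35 * t + 2 * y * t) := by
              rw [hg, eq_div_iff hd.ne', add_mul, mul_assoc t, div_mul_cancel₀ _ hd.ne']; ring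
            have h2' : (0 : ℝ) ≤ (200 - 70 * t) / (50 - 35 * t + 2 * y * t) :=
              div_nonneg (by linarith) hd.le
            have h3' : 0 ≤ 4 + t * g := by rw [h1']; exact h2'
            rw [ha]; linarith
          have hb0 : 0 ≤ 1 - a - g := by
            have h1' : 1 - a - g = (6 - g * (t + 10)) / 10 := by rw [ha]; ring
            have hkey : 14 * t + 20 ≤ y * (t + 4) := by
              nlinarith [mul_nonneg (by linarith : (0:ℝ) ≤ -t)
                (by linarith : (0:ℝ) ≤ 8 - y)]
            have hquot : g * (t + 10)
                = (70 - 8 * y) * (t + 10) / (50 - 35 * t + 2 * y * t) := by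
              rw [hg]; ring
            have h2' : g * (t + 10) ≤ 6 := by
              rw [hquot, div_le_iff₀ hd]; nlinarith [hkey]
            rw [h1']; linarith
          refine ⟨-8, le_refl _, ?_⟩
          refine comb3' hconv hC hA' hD' ha0 hb0 hg0 (by ring) ?_ ?_
          · rw [ha]; ring
          · have hg2 : g * (17.5 * t - y * t - 25) = 4 * y - 35 := by
              linear_combination (-1/2) * hgval
            rw [ha]; linear_combination (1/10 : ℝ) * hg2
  rcases key with ⟨h, hh4, hh⟩ | ⟨l, hl8, hl⟩
  · left
    exact ⟨h04, vertseg hconv hL hh (by linarith) (by linarith),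
      vertseg hconv hL hh (by linarith) (by linarith),
      vertseg hconv hL hh (by linarith) (by linarith)⟩
  · right
    exact ⟨h04', vertseg hconv hl hH (by linarith) (by linarith),
      vertseg hconv hl hH (by linarith) (by linarith),
      vertseg hconv hl hH (by linarith) (by linarith)⟩
end

section
/- Let P be a convex subset of the plane containing the points (0,0), (0,7.5), (-x,10) for some x ≤ 0, and (10,-y) for some y ∈ [0,5]. Then (4,4) ∈ P. -/
theorem stmt_2 (P : Set (ℝ × ℝ)) (hconv : Convex ℝ P)
    (h0 : ((0 : ℝ), (0 : ℝ)) ∈ P) (h1 : ((0 : ℝ), (7.5 : ℝ)) ∈ P)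
    (x : ℝ) (hx : x ≤ 0) (h2 : ((-x, (10 : ℝ)) ∈ P))
    (y : ℝ) (hy0 : 0 ≤ y) (hy5 : y ≤ 5) (h3 : ((10 : ℝ), -y) ∈ P) :
    ((4 : ℝ), (4 : ℝ)) ∈ P := by
  set u : ℝ := -x with hu'
  have hu : 0 ≤ u := by simp [hu']; linarith
  rcases le_or_gt y 1.25 with hc | hc
  · -- (4,4) = 0.6 • G + 0.4 • D where G on segment [(0,0),(0,7.5)]
    have hG := hconv h0 h1 (show (0:ℝ) ≤ (1 - 0.8*y)/9 by nlinarith)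
      (show (0:ℝ) ≤ (8 + 0.8*y)/9 by nlinarith) (by ring)
    have hF := hconv hG h3 (show (0:ℝ) ≤ (0.6:ℝ) by norm_num)
      (show (0:ℝ) ≤ (0.4:ℝ) by norm_num) (by norm_num)
    convert hF using 1
    simp only [Prod.smul_mk, Prod.mk_add_mk, Prod.ext_iff, smul_eq_mul]
    constructor <;> ring
  · -- (4,4) = (1-λ) • B + λ • H where H = (1-t) • C + t • D
    have hd1 : (0:ℝ) < 3.5*u + 4*y + 5 := by nlinarith
    have hN : (0:ℝ) < 26.25*u + 3.5*u*y + 87.5 := by nlinarith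
    set t : ℝ := (3.5*u + 10)/(3.5*u + 4*y + 5) with ht'
    set l : ℝ := 3.5*(3.5*u + 4*y + 5)/(26.25*u + 3.5*u*y + 87.5) with hl'
    have ht0 : 0 ≤ 1 - t := by
      rw [ht', sub_nonneg, div_le_one hd1]; nlinarith
    have ht1 : 0 ≤ t := by positivity
    have hH := hconv h2 h3 ht0 ht1 (by ring)
    have hl0 : 0 ≤ 1 - l := by
      rw [hl', sub_nonneg, div_le_one hN]; nlinarith
    have hl1 : 0 ≤ l := by positivity
    have hF := hconv h1 hH hl0 hl1 (by ring)
    convert hF using 1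
    simp only [Prod.smul_mk, Prod.mk_add_mk, Prod.ext_iff, smul_eq_mul, ht', hl']
    constructor <;> (field_simp; ring)
end

section
/- Let y ∈ [0,5] and let P be a convex subset of the plane containing the points (0,-7.5), (10,-y), and (x,-10) for some x with (20-4y)/(8-y) ≤ x ≤ 20. Then (4,-8) ∈ P. -/
theorem stmt_4 (P : Set (ℝ × ℝ)) (hconv : Convex ℝ P)
    (y : ℝ) (hy0 : 0 ≤ y) (hy5 : y ≤ 5)
    (h1 : ((0 : ℝ), (-7.5 : ℝ)) ∈ P) (h2 : ((10 : ℝ), -y) ∈ P)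
    (x : ℝ) (hxl : (20 - 4 * y) / (8 - y) ≤ x) (hxu : x ≤ 20)
    (h3 : ((x, (-10 : ℝ)) ∈ P)) :
    ((4 : ℝ), (-8 : ℝ)) ∈ P := by
  have hy8 : (0:ℝ) < 8 - y := by linarith
  have hx0 : (0:ℝ) ≤ x := le_trans (div_nonneg (by linarith) hy8.le) hxl
  have hxlb : 20 - 4*y ≤ x * (8 - y) := by
    have := (div_le_iff₀ hy8).mp hxl
    linarith
  have hD : (0:ℝ) < 50 + 15*x - 2*x*y := by nlinarith
  set D := 50 + 15*x - 2*x*y with hDdef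
  have hDne : D ≠ 0 := hD.ne'
  set a := 2*(x*(8-y) - (20 - 4*y)) / D with ha
  set b := (20 - x) / D with hb
  set c := (70 - 8*y) / D with hc
  have ha0 : 0 ≤ a := div_nonneg (by nlinarith) hD.le
  have hb0 : 0 ≤ b := div_nonneg (by linarith) hD.le
  have hc0 : 0 < c := div_pos (by linarith) hD
  have habc : a + b + c = 1 := by
    rw [ha, hb, hc, ← add_div, ← add_div, div_eq_one_iff_eq hDne]
    ring
  have hs : 0 < b + c := by linarith
  have hsne : b + c ≠ 0 := hs.ne'
  have hq : ((b/(b+c)) • ((10:ℝ), -y) + (c/(b+c)) • ((x:ℝ), (-10:ℝ))) ∈ P :=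
    hconv h2 h3 (div_nonneg hb0 hs.le) (div_nonneg hc0.le hs.le) (by field_simp)
  have hmem := hconv h1 hq ha0 hs.le (by linarith)
  have hcoll : (b+c) • ((b/(b+c)) • ((10:ℝ), -y) + (c/(b+c)) • ((x:ℝ), (-10:ℝ)))
      = b • ((10:ℝ), -y) + c • ((x:ℝ), (-10:ℝ)) := by
    rw [smul_add, smul_smul, smul_smul, mul_div_cancel₀ _ hsne, mul_div_cancel₀ _ hsne]
  rw [hcoll] at hmem
  have key : a • ((0:ℝ), (-7.5:ℝ)) + (b • ((10:ℝ), -y) + c • ((x:ℝ), (-10:ℝ))) = ((4:ℝ), (-8:ℝ)) := by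
    simp only [Prod.smul_mk, smul_eq_mul, Prod.mk_add_mk, Prod.mk.injEq, ha, hb, hc]
    norm_num
    constructor
    · field_simp
      ring
    · field_simp
      ring
  rwa [key] at hmem
end

section
/- Let P be a convex subset of the plane containing the points (0,0), (-x,10) for some x ∈ [0, 5/2], and (t, 10-t) for some t ∈ [5, 30]. Then (4,4) ∈ P. -/
theorem stmt_6 (P : Set (ℝ × ℝ)) (hconv : Convex ℝ P)
    (h0 : ((0 : ℝ), (0 : ℝ)) ∈ P)
    (x : ℝ) (hx0 : 0 ≤ x) (hx1 : x ≤ 5 / 2) (h1 : ((-x, (10 : ℝ)) ∈ P))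
    (t : ℝ) (ht0 : 5 ≤ t) (ht1 : t ≤ 30) (h2 : ((t, 10 - t) ∈ P)) :
    ((4 : ℝ), (4 : ℝ)) ∈ P := by
  have ht : (0:ℝ) < t := by linarith
  have hD : (0:ℝ) < t*(10-x)+10*x := by nlinarith
  set b : ℝ := (8*t-40)/(t*(10-x)+10*x) with hbdef
  have hb : 0 ≤ b := div_nonneg (by linarith) hD.le
  set c : ℝ := (4+b*x)/t with hcdef
  have hc : 0 < c := div_pos (by nlinarith [mul_nonneg hb hx0]) ht
  have hbc : 0 < b + c := by linarith
  have hkey : b*(t+x) ≤ t - 4 := by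
    rw [hbdef, div_mul_eq_mul_div, div_le_iff₀ hD]
    nlinarith [mul_nonneg hx0 (by linarith : (0:ℝ) ≤ 30 - t),
      mul_nonneg ht.le (by linarith : (0:ℝ) ≤ 5/2 - x)]
  have ha : b + c ≤ 1 := by
    have hcle : c ≤ 1 - b := by
      rw [hcdef, div_le_iff₀ ht]; nlinarith
    linarith
  have hct : c * t = 4 + b * x := by
    rw [hcdef]; field_simp
  have hbD : b * (t*(10-x)+10*x) = 8*t-40 := by
    rw [hbdef]; field_simp
  have hm : ((b/(b+c)) • ((-x,(10:ℝ)):ℝ×ℝ) + (c/(b+c)) • ((t,10-t):ℝ×ℝ)) ∈ P :=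
    hconv h1 h2 (div_nonneg hb hbc.le) (div_nonneg hc.le hbc.le)
      (by field_simp)
  have hfin := hconv h0 hm (by linarith : (0:ℝ) ≤ 1-(b+c)) hbc.le (by ring)
  have heq : ((4:ℝ),(4:ℝ)) =
      (1-(b+c)) • (((0:ℝ),(0:ℝ)):ℝ×ℝ) +
      (b+c) • ((b/(b+c)) • ((-x,(10:ℝ)):ℝ×ℝ) + (c/(b+c)) • ((t,10-t):ℝ×ℝ)) := by
    have hbc' : b + c ≠ 0 := hbc.ne'
    apply Prod.ext <;> simp [Prod.smul_def, smul_eq_mul] <;> field_simp <;> nlinarith [hct, hbD]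
  rw [heq]; exact hfin
end

section
/- Let P be a convex subset of the plane containing the points (0,0), (t,10-t) for some t ∈ [0,5], and (10,-y) for some y ∈ [0,5]. Then (4,4) ∈ P. -/
theorem stmt_7 (P : Set (ℝ × ℝ)) (hconv : Convex ℝ P)
    (h0 : ((0 : ℝ), (0 : ℝ)) ∈ P)
    (t : ℝ) (ht0 : 0 ≤ t) (ht1 : t ≤ 5) (h1 : ((t, 10 - t) ∈ P))
    (y : ℝ) (hy0 : 0 ≤ y) (hy1 : y ≤ 5) (h2 : ((10 : ℝ), -y) ∈ P) :
    ((4 : ℝ), (4 : ℝ)) ∈ P := by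
  set D : ℝ := t * y + 100 - 10 * t with hD
  have hDpos : 0 < D := by nlinarith
  set b : ℝ := (4 * y + 40) / D with hb
  set c : ℝ := (40 - 8 * t) / D with hc
  have hbpos : 0 < b := by positivity
  have hcnn : 0 ≤ c := by
    apply div_nonneg _ hDpos.le; linarith
  have hsum : 0 < b + c := by linarith
  have ha : 0 ≤ 1 - (b + c) := by
    rw [hb, hc, ← add_div, sub_nonneg, div_le_one hDpos]
    nlinarith [mul_nonneg ht0 hy0, mul_nonneg (by linarith : (0:ℝ) ≤ 5 - t) hy0,
      mul_nonneg ht0 (by linarith : (0:ℝ) ≤ 5 - y),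
      mul_nonneg (by linarith : (0:ℝ) ≤ 5 - t) (by linarith : (0:ℝ) ≤ 5 - y)]
  have hq : (b / (b + c)) • ((t, 10 - t) : ℝ × ℝ) + (c / (b + c)) • ((10, -y) : ℝ × ℝ) ∈ P := by
    apply hconv h1 h2 (div_nonneg hbpos.le hsum.le) (div_nonneg hcnn hsum.le)
    field_simp
  have hfin := hconv h0 hq ha (le_of_lt hsum) (by ring)
  have key : (1 - (b + c)) • ((0:ℝ), (0:ℝ)) +
      (b + c) • ((b / (b + c)) • ((t, 10 - t) : ℝ × ℝ) + (c / (b + c)) • ((10, -y) : ℝ × ℝ))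
      = ((4 : ℝ), (4 : ℝ)) := by
    have hne : b + c ≠ 0 := ne_of_gt hsum
    have hDne : D ≠ 0 := ne_of_gt hDpos
    have e1 : (b + c) * (b / (b + c)) = b := by field_simp
    have e2 : (b + c) * (c / (b + c)) = c := by field_simp
    simp only [smul_add, smul_smul, e1, e2]
    simp only [Prod.smul_mk, Prod.mk_add_mk, smul_eq_mul, Prod.mk.injEq]
    constructor
    · rw [hb, hc]; field_simp; ring
    · rw [hb, hc]; field_simp; ring
  rwa [key] at hfin
end

section
/- Let t ∈ [-1,0] and y ∈ [2,5], and let P be a convex, centrally symmetric subset of the plane containing the points (0,0), (t,10-t), and (10,-y). Then (4,-8) ∈ P or (4,4) ∈ P. -/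
lemma vert_seg_mem (P : Set (ℝ × ℝ)) (hconv : Convex ℝ P)
    {x a b v : ℝ} (ha : (x, a) ∈ P) (hb : (x, b) ∈ P)
    (h1 : a ≤ v) (h2 : v ≤ b) : (x, v) ∈ P := by
  rcases eq_or_lt_of_le (le_trans h1 h2) with h | h
  · subst h
    have : v = a := le_antisymm h2 h1
    subst this; exact ha
  · have hba : 0 < b - a := by linarith
    have hw1 : 0 ≤ (b - v) / (b - a) := by
      apply div_nonneg <;> linarith
    have hw2 : 0 ≤ (v - a) / (b - a) := by
      apply div_nonneg <;> linarith
    have hsum : (b - v) / (b - a) + (v - a) / (b - a) = 1 := by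
      field_simp
      try ring
    have := hconv ha hb hw1 hw2 hsum
    convert this using 1
    apply Prod.ext
    · simp [Prod.smul_mk]
      field_simp
      try ring
    · simp [Prod.smul_mk]
      field_simp
      try ring

theorem stmt_11 (P : Set (ℝ × ℝ)) (hconv : Convex ℝ P)
    (hsymm : ∀ p ∈ P, -p ∈ P)
    (t : ℝ) (ht0 : -1 ≤ t) (ht1 : t ≤ 0)
    (y : ℝ) (hy0 : 2 ≤ y) (hy1 : y ≤ 5)
    (h0 : ((0 : ℝ), (0 : ℝ)) ∈ P)
    (h1 : ((t, 10 - t) ∈ P))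
    (h2 : ((10 : ℝ), -y) ∈ P) :
    ((4 : ℝ), (-8 : ℝ)) ∈ P ∨ ((4 : ℝ), (4 : ℝ)) ∈ P := by
  have hd1 : (0:ℝ) < 10 - t := by linarith
  have hd2 : (0:ℝ) < 10 + t := by linarith
  have h1' : ((-t, t - 10) : ℝ × ℝ) ∈ P := by
    have := hsymm _ h1
    simpa [Prod.neg_mk] using this
  -- point A: combination of (10,-y) and (t, 10-t)
  set sA : ℝ := ((4 - t) * (-y) + 6 * (10 - t)) / (10 - t) with hsAdef
  have hA : ((4 : ℝ), sA) ∈ P := by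
    have ha : (0:ℝ) ≤ (4 - t) / (10 - t) := by
      apply div_nonneg <;> linarith
    have hb : (0:ℝ) ≤ 6 / (10 - t) := by positivity
    have hab : (4 - t) / (10 - t) + 6 / (10 - t) = 1 := by
      field_simp
      try ring
    have := hconv h2 h1 ha hb hab
    convert this using 1
    apply Prod.ext
    · simp [Prod.smul_mk]
      field_simp
      try ring
    · simp [Prod.smul_mk, hsAdef]
      field_simp
      try ring
  -- point B: combination of (10,-y) and (-t, t-10)
  set sB : ℝ := ((4 + t) * (-y) + 6 * (t - 10)) / (10 + t) with hsBdef
  have hB : ((4 : ℝ), sB) ∈ P := by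
    have ha : (0:ℝ) ≤ (4 + t) / (10 + t) := by
      apply div_nonneg <;> linarith
    have hb : (0:ℝ) ≤ 6 / (10 + t) := by positivity
    have hab : (4 + t) / (10 + t) + 6 / (10 + t) = 1 := by
      field_simp
      try ring
    have := hconv h2 h1' ha hb hab
    convert this using 1
    apply Prod.ext
    · simp [Prod.smul_mk]
      field_simp
      try ring
    · simp [Prod.smul_mk, hsBdef]
      field_simp
      try ring
  by_cases hc : y * (4 - t) ≤ 2 * (10 - t)
  · -- sA ≥ 4 and sB ≤ 4 : get (4,4)
    right
    have hAge : (4:ℝ) ≤ sA := by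
      rw [hsAdef, le_div_iff₀ hd1]
      nlinarith
    have hBle : sB ≤ (4:ℝ) := by
      rw [hsBdef, div_le_iff₀ hd2]
      nlinarith
    exact vert_seg_mem P hconv hB hA hBle hAge
  · -- sB ≤ -8 and sA ≥ -8 : get (4,-8)
    left
    push_neg at hc
    have hBle : sB ≤ (-8:ℝ) := by
      rw [hsBdef, div_le_iff₀ hd2]
      nlinarith [mul_nonneg (neg_nonneg.mpr ht1) (show (0:ℝ) ≤ 8 - y by linarith)]
    have hAge : (-8:ℝ) ≤ sA := by
      rw [hsAdef, le_div_iff₀ hd1]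
      nlinarith
    exact vert_seg_mem P hconv hB hA hBle hAge
end

section
/- Let H be an abelian group and τ : H → S₃ a group homomorphism (where S₃ is the symmetric group on three elements). For any h₁, h₂ ∈ H, at least one of τ(h₁), τ(h₂), τ(h₁ + h₂), τ(h₁ - h₂) is the identity permutation. -/
theorem stmt_12 (H : Type*) [AddCommGroup H]
    (τ : H → Equiv.Perm (Fin 3))
    (hτ : ∀ a b : H, τ (a + b) = τ a * τ b)
    (h₁ h₂ : H) :
    τ h₁ = 1 ∨ τ h₂ = 1 ∨ τ (h₁ + h₂) = 1 ∨ τ (h₁ - h₂) = 1 := by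
  have h0 : τ 0 = 1 := by
    have := hτ 0 0
    simp at this
    exact this
  have hneg : ∀ a : H, τ (-a) = (τ a)⁻¹ := by
    intro a
    have := hτ a (-a)
    simp [h0] at this
    exact eq_inv_of_mul_eq_one_right this.symm
  have hcomm : τ h₁ * τ h₂ = τ h₂ * τ h₁ := by
    rw [← hτ, ← hτ, add_comm]
  have hsum : τ (h₁ + h₂) = τ h₁ * τ h₂ := hτ h₁ h₂
  have hdiff : τ (h₁ - h₂) = τ h₁ * (τ h₂)⁻¹ := by
    rw [sub_eq_add_neg, hτ, hneg]
  rw [hsum, hdiff]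
  have key : ∀ a b : Equiv.Perm (Fin 3), a * b = b * a →
      a = 1 ∨ b = 1 ∨ a * b = 1 ∨ a * b⁻¹ = 1 := by decide
  exact key _ _ hcomm
end

section
/- Let A be a multiset whose elements all lie in {+1, -1, +10, -10, +11, -11}, such that the sum of the elements of A is divisible by 37 and the sum over A of h(a) is nonzero in ℤ², where h(1)=(1,0), h(-1)=(-1,0), h(10)=(0,1), h(-10)=(0,-1), h(11)=(1,1), h(-11)=(-1,-1). Then A has at least 7 elements (counted with multiplicity). -/
/-- The map `h` from the proof of Proposition 4.1. -/
def hmap (a : ℤ) : ℤ × ℤ :=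
  if a = 1 then (1, 0)
  else if a = -1 then (-1, 0)
  else if a = 10 then (0, 1)
  else if a = -10 then (0, -1)
  else if a = 11 then (1, 1)
  else if a = -11 then (-1, -1)
  else (0, 0)

lemma hmap1 : hmap 1 = (1, 0) := rfl
lemma hmap1' : hmap (-1) = (-1, 0) := rfl
lemma hmap10 : hmap 10 = (0, 1) := rfl
lemma hmap10' : hmap (-10) = (0, -1) := rfl
lemma hmap11 : hmap 11 = (1, 1) := rfl
lemma hmap11' : hmap (-11) = (-1, -1) := rfl

lemma hmap_key (A : Multiset ℤ)
    (hA : ∀ a ∈ A, a ∈ ({1, -1, 10, -10, 11, -11} : Set ℤ)) :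
    A.sum = (A.map hmap).sum.1 + 10 * (A.map hmap).sum.2 ∧
    -(Multiset.card A : ℤ) ≤ (A.map hmap).sum.1 ∧
    (A.map hmap).sum.1 ≤ (Multiset.card A : ℤ) ∧
    -(Multiset.card A : ℤ) ≤ (A.map hmap).sum.2 ∧
    (A.map hmap).sum.2 ≤ (Multiset.card A : ℤ) ∧
    -(Multiset.card A : ℤ) ≤ (A.map hmap).sum.2 - (A.map hmap).sum.1 ∧
    (A.map hmap).sum.2 - (A.map hmap).sum.1 ≤ (Multiset.card A : ℤ) := by
  induction A using Multiset.induction_on with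
  | empty => simp
  | cons a s ih =>
    have ha := hA a (Multiset.mem_cons_self a s)
    obtain ⟨h1, h2, h3, h4, h5, h6, h7⟩ := ih (fun b hb => hA b (Multiset.mem_cons_of_mem hb))
    simp only [Multiset.map_cons, Multiset.sum_cons, Multiset.card_cons, Prod.fst_add,
      Prod.snd_add, Nat.cast_add, Nat.cast_one]
    simp only [Set.mem_insert_iff, Set.mem_singleton_iff] at ha
    rcases ha with rfl | rfl | rfl | rfl | rfl | rfl <;>
      simp only [hmap1, hmap1', hmap10, hmap10', hmap11, hmap11'] <;> omega

theorem stmt_14 (A : Multiset ℤ)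
    (hA : ∀ a ∈ A, a ∈ ({1, -1, 10, -10, 11, -11} : Set ℤ))
    (hsum : (37 : ℤ) ∣ A.sum)
    (hh : (A.map hmap).sum ≠ (0, 0)) :
    7 ≤ Multiset.card A := by
  obtain ⟨h1, h2, h3, h4, h5, h6, h7⟩ := hmap_key A hA
  rw [h1] at hsum
  obtain ⟨k, hk⟩ := hsum
  have hne : (A.map hmap).sum.1 ≠ 0 ∨ (A.map hmap).sum.2 ≠ 0 := by
    by_contra h
    push_neg at h
    exact hh (Prod.ext h.1 h.2)
  by_contra hlt
  push_neg at hlt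
  have hk3 : k = -1 ∨ k = 0 ∨ k = 1 := by omega
  rcases hk3 with rfl | rfl | rfl <;> rcases hne with h | h <;> omega
end

section
/- Let A be a multiset with elements from {+1, -10} such that the sum of A is divisible by 37 and the sum of h(a) over A is nonzero in ℤ², with h(1)=(1,0) and h(-10)=(0,-1). Then |A| ≥ 7, and this is tight: the multiset {1,1,1,-10,-10,-10,-10} has sum -37 and nonzero image under h. -/
/-- The map `h` restricted to the relevant values. -/
def hmap' (a : ℤ) : ℤ × ℤ :=
  if a = 1 then (1, 0) else if a = -10 then (0, -1) else (0, 0)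

lemma hmap'_one : hmap' 1 = (1, 0) := rfl
lemma hmap'_neg : hmap' (-10) = (0, -1) := rfl

lemma aux_15 (A : Multiset ℤ) (hA : ∀ a ∈ A, a ∈ ({1, -10} : Set ℤ)) :
    A.sum = (A.count 1 : ℤ) - 10 * (A.count (-10) : ℤ) ∧
    (A.map hmap').sum = ((A.count 1 : ℤ), -(A.count (-10) : ℤ)) ∧
    Multiset.card A = A.count 1 + A.count (-10) := by
  induction A using Multiset.induction with
  | empty => simp; rfl
  | cons a s ih =>
    have ha : a = 1 ∨ a = -10 := hA a (Multiset.mem_cons_self a s)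
    obtain ⟨h1, h2, h3⟩ := ih (fun b hb => hA b (Multiset.mem_cons_of_mem hb))
    rcases ha with rfl | rfl <;>
      rw [Multiset.map_cons, Multiset.sum_cons, Multiset.sum_cons] <;>
      simp only [Multiset.count_cons, Multiset.card_cons, h1, h2, h3,
        hmap'_one, hmap'_neg, Prod.ext_iff, Prod.mk_add_mk, Prod.fst, Prod.snd] <;>
      norm_num <;> push_cast <;> constructor <;> try constructor
    all_goals ring
  
theorem stmt_15 :
    (∀ A : Multiset ℤ,
      (∀ a ∈ A, a ∈ ({1, -10} : Set ℤ)) →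
      (37 : ℤ) ∣ A.sum →
      (A.map hmap').sum ≠ (0, 0) →
      7 ≤ Multiset.card A) ∧
    ((({1, 1, 1, -10, -10, -10, -10} : Multiset ℤ).sum = -37) ∧
      (({1, 1, 1, -10, -10, -10, -10} : Multiset ℤ).map hmap').sum ≠ (0, 0)) := by
  constructor
  · intro A hA hdvd hne
    obtain ⟨h1, h2, h3⟩ := aux_15 A hA
    rw [h1] at hdvd
    rw [h2] at hne
    obtain ⟨k, hk⟩ := hdvd
    have hne' : ¬(A.count 1 = 0 ∧ A.count (-10) = 0) := by
      intro ⟨hm, hn⟩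
      exact hne (by simp [hm, hn])
    rw [h3]
    by_contra hc
    push_neg at hc
    have hk' : k = 0 ∨ k = -1 := by omega
    rcases hk' with rfl | rfl <;> omega
  · constructor
    · decide
    · simp [hmap', Prod.ext_iff]
end

section
/- Let A be a multiset with elements from {+1, +10, +11}, nonempty, such that the sum of A is divisible by 37. Then |A| ≥ 7. -/
lemma aux_16 (A : Multiset ℤ) (hA : ∀ a ∈ A, a ∈ ({1, 10, 11} : Set ℤ)) :
    ∃ a b c : ℕ, A.sum = a + 10 * b + 11 * c ∧ Multiset.card A = a + b + c := by
  induction A using Multiset.induction with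
  | empty => exact ⟨0, 0, 0, by simp, by simp⟩
  | cons x A ih =>
    obtain ⟨a, b, c, hs, hc⟩ := ih (fun y hy => hA y (Multiset.mem_cons_of_mem hy))
    have hx := hA x (Multiset.mem_cons_self x A)
    simp only [Set.mem_insert_iff, Set.mem_singleton_iff] at hx
    rcases hx with h | h | h
    · exact ⟨a + 1, b, c, by simp [h, hs]; ring, by simp [hc]; ring⟩
    · exact ⟨a, b + 1, c, by simp [h, hs]; ring, by simp [hc]; ring⟩
    · exact ⟨a, b, c + 1, by simp [h, hs]; ring, by simp [hc]; ring⟩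

theorem stmt_16 (A : Multiset ℤ) (hne : A ≠ 0)
    (hA : ∀ a ∈ A, a ∈ ({1, 10, 11} : Set ℤ))
    (hsum : (37 : ℤ) ∣ A.sum) :
    7 ≤ Multiset.card A := by
  obtain ⟨a, b, c, hs, hc⟩ := aux_16 A hA
  rw [hs] at hsum
  have hpos : 0 < Multiset.card A := Multiset.card_pos.mpr hne
  rw [hc] at hpos ⊢
  have : (37 : ℤ) ∣ ((a : ℤ) + 10 * b + 11 * c) := hsum
  have h37 : 37 ∣ (a + 10 * b + 11 * c) := by
    have := Int.ofNat_dvd.mp (by exact_mod_cast this)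
    exact this
  obtain ⟨k, hk⟩ := h37
  by_contra h
  push_neg at h
  have hk1 : k = 1 := by omega
  subst hk1
  have hc3 : c ≤ 3 := by omega
  interval_cases c <;> omega
end

section
/- The Cayley graph of ℤ/37ℤ with connection set {±1, ±10, ±11} has no independent set of size 10. -/
/-- The Cayley graph Γ(ℤ₃₇, {1,10,11}). -/
def cayley : SimpleGraph (ZMod 37) :=
  SimpleGraph.fromRel (fun x y => x - y ∈ ({1, -1, 10, -10, 11, -11} : Set (ZMod 37)))

def nbrMask (i : Nat) : Nat :=
  (1 <<< ((i+1)%37)) ||| (1 <<< ((i+36)%37)) ||| (1 <<< ((i+10)%37)) |||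
  (1 <<< ((i+27)%37)) ||| (1 <<< ((i+11)%37)) ||| (1 <<< ((i+26)%37))

def search : List Nat → Nat → Nat → Nat → Bool
  | _, _, _, 0 => true
  | [], _, _, _+1 => false
  | v :: tl, rem, forb, need+1 =>
    if rem < need + 1 then false
    else
      (!(forb.testBit v) && search tl (rem-1) (forb ||| nbrMask v) need)
      || search tl (rem-1) forb (need+1)

def ord : List Nat :=
  [11, 27, 1, 36, 26, 10, 34, 33, 7, 23, 6, 24, 13, 5, 16, 15, 14, 4, 3, 17,
   32, 31, 30, 25, 35, 8, 18, 29, 19, 22, 12, 2, 28, 20, 21, 9]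

lemma adj_iff (x y : ZMod 37) : cayley.Adj x y ↔ x ≠ y ∧
    (x - y = 1 ∨ x - y = -1 ∨ x - y = 10 ∨ x - y = -10 ∨ x - y = 11 ∨ x - y = -11 ∨
     y - x = 1 ∨ y - x = -1 ∨ y - x = 10 ∨ y - x = -10 ∨ y - x = 11 ∨ y - x = -11) := by
  simp only [cayley, SimpleGraph.fromRel_adj, Set.mem_insert_iff, Set.mem_singleton_iff]
  tauto

lemma key : ∀ x y : ZMod 37, x ≠ y →
    ¬ (x - y = 1 ∨ x - y = -1 ∨ x - y = 10 ∨ x - y = -10 ∨ x - y = 11 ∨ x - y = -11 ∨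
     y - x = 1 ∨ y - x = -1 ∨ y - x = 10 ∨ y - x = -10 ∨ y - x = 11 ∨ y - x = -11) →
    (nbrMask x.val).testBit y.val = false := by decide

lemma complete : ∀ (l : List Nat) (forb need : Nat) (s : Finset (ZMod 37)),
    s.card = need →
    (∀ x ∈ s, x.val ∈ l) →
    (∀ x ∈ s, forb.testBit x.val = false) →
    (∀ x ∈ s, ∀ y ∈ s, ¬ cayley.Adj x y) →
    search l l.length forb need = true := by
  intro l
  induction l with
  | nil =>
    intro forb need s hcard hmem _ _
    have : s = ∅ := by
      by_contra h
      obtain ⟨x, hx⟩ := Finset.nonempty_iff_ne_empty.2 h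
      exact absurd (hmem x hx) List.not_mem_nil
    subst this
    simp at hcard
    subst hcard
    rfl
  | cons v tl ih =>
    intro forb need s hcard hmem hforb hindep
    match need with
    | 0 => rfl
    | need+1 =>
      -- s.card ≤ (v :: tl).length
      have hinj : Function.Injective (ZMod.val (n := 37)) := ZMod.val_injective 37
      have hle : s.card ≤ (v :: tl).length := by
        calc s.card = (s.image ZMod.val).card := (Finset.card_image_of_injective s hinj).symm
          _ ≤ (v :: tl).toFinset.card := by
              apply Finset.card_le_card
              intro a ha
              simp only [Finset.mem_image] at ha
              obtain ⟨x, hx, rfl⟩ := ha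
              exact List.mem_toFinset.2 (hmem x hx)
          _ ≤ (v :: tl).length := (v :: tl).toFinset_card_le
      have hnotlt : ¬ ((v :: tl).length < need + 1) := by omega
      show (if (v :: tl).length < need + 1 then false else _) = true
      rw [if_neg hnotlt]
      have hlen : (v :: tl).length - 1 = tl.length := by simp
      by_cases hv : ∃ x ∈ s, x.val = v
      · obtain ⟨x, hxs, hxv⟩ := hv
        apply Bool.or_eq_true_iff.2
        left
        apply Bool.and_eq_true_iff.2
        constructor
        · have hfb := hforb x hxs
          rw [hxv] at hfb
          rw [Bool.not_eq_true', hfb]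
        · rw [hlen]
          apply ih (forb ||| nbrMask v) need (s.erase x)
          · rw [Finset.card_erase_of_mem hxs, hcard]
            omega
          · intro y hy
            have hyv : y.val ≠ v := by
              intro h
              exact (Finset.mem_erase.1 hy).1 (hinj (h.trans hxv.symm))
            rcases List.mem_cons.1 (hmem y (Finset.mem_of_mem_erase hy)) with h | h
            · exact absurd h hyv
            · exact h
          · intro y hy
            have hys := Finset.mem_of_mem_erase hy
            have hyx : y ≠ x := (Finset.mem_erase.1 hy).1
            have hnadj : ¬ cayley.Adj x y := hindep x hxs y hys
            rw [adj_iff] at hnadj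
            have hkey : (nbrMask x.val).testBit y.val = false :=
              key x y (Ne.symm hyx) (fun hd => hnadj ⟨Ne.symm hyx, hd⟩)
            rw [hxv] at hkey
            rw [Nat.testBit_or, hforb y hys, hkey]
            rfl
          · intro a ha b hb
            exact hindep a (Finset.mem_of_mem_erase ha) b (Finset.mem_of_mem_erase hb)
      · apply Bool.or_eq_true_iff.2
        right
        rw [hlen]
        apply ih forb (need+1) s hcard
        · intro x hx
          rcases List.mem_cons.1 (hmem x hx) with h | h
          · exact absurd ⟨x, hx, h⟩ hv
          · exact h
        · exact hforb
        · exact hindep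

lemma ord_mem : ∀ x : ZMod 37, x ≠ 0 → x.val ∈ ord := by decide

lemma forb0 : ∀ x : ZMod 37, x ≠ 0 →
    ¬ (x - 0 = 1 ∨ x - 0 = -1 ∨ x - 0 = 10 ∨ x - 0 = -10 ∨ x - 0 = 11 ∨ x - 0 = -11 ∨
     (0:ZMod 37) - x = 1 ∨ (0:ZMod 37) - x = -1 ∨ (0:ZMod 37) - x = 10 ∨
     (0:ZMod 37) - x = -10 ∨ (0:ZMod 37) - x = 11 ∨ (0:ZMod 37) - x = -11) →
    ((nbrMask 0 ||| 1).testBit x.val) = false := by decide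

set_option maxHeartbeats 4000000 in
lemma big : search ord 36 (nbrMask 0 ||| 1) 9 = false := by decide

theorem stmt_18 :
    ¬ ∃ s : Finset (ZMod 37), s.card = 10 ∧
      ∀ x ∈ s, ∀ y ∈ s, ¬ cayley.Adj x y := by
  rintro ⟨s, hcard, hindep⟩
  -- translate so that 0 ∈ s
  have hne : s.Nonempty := Finset.card_pos.1 (by omega)
  obtain ⟨a, ha⟩ := hne
  set t : Finset (ZMod 37) := s.image (· - a) with ht
  have hinj : Function.Injective (· - a : ZMod 37 → ZMod 37) := fun x y h => by
    simpa using congrArg (· + a) h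
  have htcard : t.card = 10 := by rw [ht, Finset.card_image_of_injective _ hinj, hcard]
  have htindep : ∀ x ∈ t, ∀ y ∈ t, ¬ cayley.Adj x y := by
    intro x hx y hy
    obtain ⟨x', hx', rfl⟩ := Finset.mem_image.1 hx
    obtain ⟨y', hy', rfl⟩ := Finset.mem_image.1 hy
    intro hadj
    apply hindep x' hx' y' hy'
    rw [adj_iff] at hadj ⊢
    obtain ⟨hne', hd⟩ := hadj
    refine ⟨fun h => hne' (by rw [h]), ?_⟩
    simpa [sub_sub_sub_cancel_right] using hd
  have h0 : (0 : ZMod 37) ∈ t := Finset.mem_image.2 ⟨a, ha, by simp⟩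
  have := complete ord (nbrMask 0 ||| 1) 9 (t.erase 0)
    (by rw [Finset.card_erase_of_mem h0, htcard])
    (fun x hx => ord_mem x (Finset.mem_erase.1 hx).1)
    (fun x hx => by
      have hx0 : x ≠ 0 := (Finset.mem_erase.1 hx).1
      have hnadj : ¬ cayley.Adj x 0 := htindep x (Finset.mem_of_mem_erase hx) 0 h0
      rw [adj_iff] at hnadj
      exact forb0 x hx0 (fun hd => hnadj ⟨hx0, hd⟩))
    (fun x hx y hy =>
      htindep x (Finset.mem_of_mem_erase hx) y (Finset.mem_of_mem_erase hy))
  rw [show ord.length = 36 from rfl] at this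
  rw [big] at this
  exact Bool.false_ne_true this
end
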